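/- There exists a constant C > 0 such that for all even integers n ≥ 4, | MSE(n, n/2) − 1/(4n) − 1/(2πn) | ≤ C/n². In particular, MSE(n, n/2) = 1/(4n) + 1/(2πn) + O(n^{−2}) as n → ∞ along even integers. -/

import Mathlib

open Real

/-- Binomial coefficient with an integer lower index, with the convention that it
vanishes for negative lower index (and, via `Nat.choose`, above the upper index). -/
def ibinom (a : ℕ) (b : ℤ) : ℕ := if 0 ≤ b then a.choose b.toNat else 0

/-- The fold covariance of k-fold cross-validation of the Majority algorithm on `n`
i.i.d. uniformly random binary labels with fold size `m = n/k`: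
`Cov(n, m) = 2^{-n} · Σ_{j=0}^{m-1} binom(m-1, j)² · binom(n-2m, ⌊(n-m)/2⌋ - j)`. -/
noncomputable def Cov (n m : ℕ) : ℝ :=
  (2 : ℝ)⁻¹ ^ n * ∑ j ∈ Finset.range m,
    ((m - 1).choose j : ℝ) ^ 2 * (ibinom (n - 2 * m) (((n : ℤ) - m) / 2 - j) : ℝ)

/-- The mean-squared error of the k-fold cross-validation risk estimator of Majority
under uniformly random labels, with fold size `m = n/k`:
`MSE(n, m) = (1 - m/n)·Cov(n, m) + 1/(4n)`. -/
noncomputable def MSE (n m : ℕ) : ℝ :=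
  (1 - (m : ℝ) / n) * Cov n m + 1 / (4 * n)

/-- Wallis-product bounds on the square of the normalized central binomial coefficient. -/
lemma central_sq_bounds (t : ℕ) (ht : 1 ≤ t) :
    1 / (π * (t + 1/2)) ≤ (((2*t).choose t : ℝ) / 4^t)^2 ∧
      (((2*t).choose t : ℝ) / 4^t)^2 ≤ 1 / (π * t) := by
  have hfac : (((2*t).choose t : ℝ)) * (t.factorial : ℝ) * (t.factorial : ℝ)
      = ((2*t).factorial : ℝ) := by
    have := Nat.choose_mul_factorial_mul_factorial (show t ≤ 2*t by omega)
    have h2 : 2*t - t = t := by omega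
    rw [h2] at this
    exact_mod_cast congrArg (Nat.cast : ℕ → ℝ) this
  have hW := Real.Wallis.W_eq_factorial_ratio t
  have hWpos := Real.Wallis.W_pos t
  have hWle := Real.Wallis.W_le t
  have hleW := Real.Wallis.le_W t
  have hπ := Real.pi_pos
  have htR : (1:ℝ) ≤ t := by exact_mod_cast ht
  have hfacpos : (0:ℝ) < (t.factorial : ℝ) := by positivity
  have hchpos : (0:ℝ) < (((2*t).choose t : ℝ)) := by
    exact_mod_cast Nat.choose_pos (show t ≤ 2*t by omega)
  have hpow : ((2:ℝ))^(4*t) = (4:ℝ)^t * 4^t := by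
    rw [pow_mul, ← mul_pow]; norm_num
  have hD : ((2*t).factorial : ℝ) = ((2*t).choose t : ℝ) * (t.factorial : ℝ)^2 := by
    rw [← hfac]; ring
  have key : (((2*t).choose t : ℝ) / 4^t)^2 = 1 / ((2*t+1) * Real.Wallis.W t) := by
    rw [hW, hD, hpow]
    have h4 : ((4:ℝ)^t) ≠ 0 := by positivity
    field_simp
  have h1 : (2*(t:ℝ)+1) * (π/2) ≤ Real.Wallis.W t * (2*t+2) := by
    rw [div_mul_eq_mul_div] at hleW
    exact (div_le_iff₀ (show (0:ℝ) < 2*t+2 by positivity)).1 hleW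
  constructor
  · rw [key, div_le_div_iff₀ (by positivity) (by positivity)]
    nlinarith [hWle, hπ, htR, mul_le_mul_of_nonneg_left hWle (show (0:ℝ) ≤ 2*t+1 by positivity)]
  · rw [key, div_le_div_iff₀ (by positivity) (by positivity)]
    nlinarith [h1, mul_le_mul_of_nonneg_right h1 (show (0:ℝ) ≤ 2*t+1 by positivity), hπ, htR, hWpos]

lemma ibinom_zero (b : ℤ) : ibinom 0 b = if b = 0 then 1 else 0 := by
  unfold ibinom
  rcases eq_or_ne b 0 with rfl | h
  · simp
  · simp only [h, if_false]
    split_ifs with hb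
    · exact Nat.choose_eq_zero_of_lt (by omega)
    · rfl

lemma cov_eval (m : ℕ) (hm : 2 ≤ m) :
    Cov (2*m) m = (2:ℝ)⁻¹ ^ (2*m) * ((m-1).choose (m/2) : ℝ)^2 := by
  unfold Cov
  congr 1
  rw [show (2*m) - 2*m = 0 by omega]
  rw [Finset.sum_eq_single (m/2)]
  · have h0 : ((2*m : ℕ) : ℤ) - (m:ℤ) = (m:ℤ) := by push_cast; ring
    rw [h0, show (m:ℤ)/2 - ((m/2 : ℕ) : ℤ) = 0 by omega, ibinom_zero]
    norm_num
  · intro j hj hne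
    have h0 : ((2*m : ℕ) : ℤ) - (m:ℤ) = (m:ℤ) := by push_cast; ring
    rw [h0, ibinom_zero]
    have : (m:ℤ)/2 - (j:ℤ) ≠ 0 := by
      simp only [Finset.mem_range] at hj
      omega
    simp [this]
  · intro h
    exact absurd (Finset.mem_range.2 (by omega)) h

/-- The final elementary estimate. -/
lemma final_ineq (t s B : ℝ) (ht : 1 ≤ t) (hs1 : t ≤ s) (hs2 : s ≤ t + 1/2)
    (hB1 : 1/(π*(t+1/2)) ≤ B) (hB2 : B ≤ 1/(π*t)) :
    |B/8 - 1/(2*π*(4*s))| ≤ 1/(4*s)^2 := by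
  have hπ3 := Real.pi_gt_three
  have hπ0 : (0:ℝ) < π := Real.pi_pos
  have hs0 : (0:ℝ) < s := by linarith
  have hsπ : s ≤ π * t := by nlinarith
  have hsπ' : s ≤ π * (t + 1/2) := by nlinarith
  rw [abs_le]
  constructor
  · have h2 : 1/(2*π*(4*s)) - 1/(π*(t+1/2))/8 ≤ 1/(4*s)^2 := by
      rw [div_div, div_sub_div _ _ (by positivity) (by positivity),
        div_le_div_iff₀ (by positivity) (by positivity)]
      nlinarith [hsπ', mul_le_mul_of_nonneg_right hsπ' hs0.le, sq_nonneg s, mul_pos hπ0 hs0,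
        mul_pos (mul_pos hπ0 hs0) hs0]
    linarith
  · have h1 : 1/(π*t)/8 - 1/(2*π*(4*s)) ≤ 1/(4*s)^2 := by
      rw [div_div, div_sub_div _ _ (by positivity) (by positivity),
        div_le_div_iff₀ (by positivity) (by positivity)]
      nlinarith [hsπ, mul_le_mul_of_nonneg_right hsπ hs0.le, sq_nonneg s, mul_pos hπ0 hs0,
        mul_pos (mul_pos hπ0 hs0) hs0]
    linarith

/-- **Asymptotics of the 2-fold MSE.**
`MSE(n, n/2) = 1/(4n) + 1/(2πn) + O(n^{-2})` along even integers. -/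
theorem mse_twofold_asymptotics :
    ∃ C : ℝ, 0 < C ∧ ∀ n : ℕ, 4 ≤ n → Even n →
      |MSE n (n / 2) - 1 / (4 * n) - 1 / (2 * π * n)| ≤ C / (n : ℝ) ^ 2 := by
  refine ⟨1, one_pos, fun n hn4 hev => ?_⟩
  obtain ⟨m, hm⟩ := hev
  have hnm : n = 2*m := by omega
  have hm2 : 2 ≤ m := by omega
  have hdiv : n / 2 = m := by omega
  have hmne : (m:ℝ) ≠ 0 := by exact_mod_cast (by omega : m ≠ 0)
  have hmse : MSE n (n/2) - 1 / (4*(n:ℝ)) =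
      (1/2) * ((2:ℝ)⁻¹^(2*m) * (((m-1).choose (m/2)):ℝ)^2) := by
    rw [hdiv, MSE, hnm, cov_eval m hm2]
    push_cast
    field_simp
    ring
  rcases Nat.even_or_odd m with ⟨t, htm⟩ | ⟨t, htm⟩
  · -- m = 2t, n = 4t
    have ht1 : 1 ≤ t := by omega
    have htR : (1:ℝ) ≤ (t:ℝ) := by exact_mod_cast ht1
    obtain ⟨hB1, hB2⟩ := central_sq_bounds t ht1
    -- choose identity
    obtain ⟨u, rfl⟩ : ∃ u, t = u + 1 := ⟨t-1, by omega⟩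
    set t := u + 1 with htdef
    have hsym : (2*u+1).choose u = (2*u+1).choose (u+1) := by
      have := Nat.choose_symm (show u+1 ≤ 2*u+1 by omega)
      rwa [show 2*u+1 - (u+1) = u by omega] at this
    have hpascal : (2*t).choose t = (2*u+1).choose u + (2*u+1).choose (u+1) := by
      rw [show 2*t = (2*u+1)+1 by omega]
      exact Nat.choose_succ_succ (2*u+1) u
    have hch : (2*t).choose t = 2 * ((2*t-1).choose t) := by
      rw [hpascal, hsym, show 2*t-1 = 2*u+1 by omega, show t = u+1 from rfl]
      ring
    have hC : (((m-1).choose (m/2)) : ℝ) = ((2*t).choose t : ℝ)/2 := by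
      rw [show m - 1 = 2*t-1 by omega, show m/2 = t by omega, eq_div_iff (two_ne_zero)]
      rw [mul_comm]
      exact_mod_cast hch.symm
    have hinv : ((2:ℝ)⁻¹)^(4*t) = ((16:ℝ)^t)⁻¹ := by
      rw [pow_mul, ← inv_pow]
      norm_num
    have h16 : ((4:ℝ)^t)^2 = 16^t := by
      rw [← pow_mul, mul_comm, pow_mul]
      norm_num
    have hval : MSE n (n/2) - 1 / (4*(n:ℝ)) = (((2*t).choose t : ℝ)/4^t)^2/8 := by
      rw [hmse, hC, show 2*m = 4*t by omega, hinv, ← h16]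
      have h4ne : ((4:ℝ)^t) ≠ 0 := by positivity
      field_simp
      ring
    have hns : (n:ℝ) = 4*(t:ℝ) := by
      have : n = 4*t := by omega
      exact_mod_cast congrArg (Nat.cast : ℕ → ℝ) this
    rw [hval, hns]
    exact final_ineq (t:ℝ) (t:ℝ) _ htR le_rfl (by linarith) hB1 hB2
  · -- m = 2t+1, n = 4t+2
    have ht1 : 1 ≤ t := by omega
    have htR : (1:ℝ) ≤ (t:ℝ) := by exact_mod_cast ht1
    obtain ⟨hB1, hB2⟩ := central_sq_bounds t ht1
    have hinv : ((2:ℝ)⁻¹)^(4*t+2) = ((16:ℝ)^t)⁻¹ * 4⁻¹ := by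
      rw [pow_add, pow_mul, ← inv_pow]
      norm_num
    have h16 : ((4:ℝ)^t)^2 = 16^t := by
      rw [← pow_mul, mul_comm, pow_mul]
      norm_num
    have hval : MSE n (n/2) - 1 / (4*(n:ℝ)) = (((2*t).choose t : ℝ)/4^t)^2/8 := by
      rw [hmse, show m - 1 = 2*t by omega, show m/2 = t by omega,
        show 2*m = 4*t+2 by omega, hinv, ← h16]
      have h4ne : ((4:ℝ)^t) ≠ 0 := by positivity
      field_simp
      ring
    have hns : (n:ℝ) = 4*((t:ℝ)+1/2) := by
      have : (n:ℝ) = 4*(t:ℝ)+2 := by exact_mod_cast congrArg (Nat.cast : ℕ → ℝ) (show n = 4*t+2 by omega)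
      rw [this]; ring
    rw [hval, hns]
    exact final_ineq (t:ℝ) ((t:ℝ)+1/2) _ htR (by linarith) le_rfl hB1 hB2
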